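/- In the all-Gaussian case, the extended asymptotic variance satisfies V(r) + BV(r) = (1/(2n)) ( (1+r²)²/(r² √((2+r²)² − 1)) − 1 ), where V(r) + BV(r) = (1/(2n)) ∑_{k=1}^∞ (1+r²)^{-2k} k! ∑_{j=0}^{⌊k/2⌋} r^{4j}/(2^{2j} (k−2j)! (j!)²). -/

import Mathlib

open Finset

noncomputable def gevCB (i : ℕ) : ℝ := (Nat.centralBinom i : ℝ)

lemma gevCB_rec (i : ℕ) : ((i : ℝ) + 1) * gevCB (i + 1) = (4 * i + 2) * gevCB i := by
  have h := Nat.succ_mul_centralBinom_succ i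
  have : ((i + 1) * Nat.centralBinom (i + 1) : ℝ) = (2 * (2 * i + 1) * Nat.centralBinom i : ℝ) := by
    exact_mod_cast congrArg (Nat.cast : ℕ → ℝ) h
  push_cast at this
  unfold gevCB; push_cast; linarith

lemma gevCB_sym (m : ℕ) :
    2 * ∑ i ∈ range (m + 1), (i : ℝ) * gevCB i * gevCB (m - i)
      = (m : ℝ) * ∑ i ∈ range (m + 1), gevCB i * gevCB (m - i) := by
  have hrefl : ∑ i ∈ range (m + 1), (i : ℝ) * gevCB i * gevCB (m - i)
      = ∑ i ∈ range (m + 1), ((m - i : ℕ) : ℝ) * gevCB (m - i) * gevCB i := by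
    rw [← Finset.sum_range_reflect (fun i => (i : ℝ) * gevCB i * gevCB (m - i)) (m + 1)]
    apply Finset.sum_congr rfl
    intro i hi
    simp only [Finset.mem_range] at hi
    have h1 : m + 1 - 1 - i = m - i := by omega
    have h2 : m - (m - i) = i := by omega
    rw [h1, h2]
  rw [two_mul]
  nth_rewrite 2 [hrefl]
  rw [← Finset.sum_add_distrib, Finset.mul_sum]
  apply Finset.sum_congr rfl
  intro i hi
  simp only [Finset.mem_range] at hi
  have : ((m - i : ℕ) : ℝ) = (m : ℝ) - i := by
    have : i ≤ m := by omega
    push_cast [this]; ring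
  rw [this]; ring

lemma gevCB_conv (m : ℕ) : ∑ i ∈ range (m + 1), gevCB i * gevCB (m - i) = 4 ^ m := by
  induction m with
  | zero => simp [gevCB, Nat.centralBinom]
  | succ n ih =>
    have key : ∑ j ∈ range (n + 2), (j : ℝ) * gevCB j * gevCB (n + 1 - j)
        = ∑ i ∈ range (n + 1), (4 * (i : ℝ) + 2) * (gevCB i * gevCB (n - i)) := by
      rw [Finset.sum_range_succ' (fun j => (j : ℝ) * gevCB j * gevCB (n + 1 - j)) (n + 1)]
      simp only [Nat.cast_zero, zero_mul, add_zero]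
      apply Finset.sum_congr rfl
      intro i hi
      have h1 : n + 1 - (i + 1) = n - i := by omega
      rw [h1]
      push_cast
      rw [gevCB_rec i]
      ring
    have hsym1 := gevCB_sym (n + 1)
    have hsym2 := gevCB_sym n
    have hr : ∑ i ∈ range (n + 1), (4 * (i : ℝ) + 2) * (gevCB i * gevCB (n - i))
        = 4 * ∑ i ∈ range (n + 1), (i : ℝ) * gevCB i * gevCB (n - i)
          + 2 * ∑ i ∈ range (n + 1), gevCB i * gevCB (n - i) := by
      rw [Finset.mul_sum, Finset.mul_sum, ← Finset.sum_add_distrib]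
      apply Finset.sum_congr rfl; intro i _; ring
    rw [hr, ih] at key
    rw [ih] at hsym2
    have hpos : (0 : ℝ) < (n : ℝ) + 1 := by positivity
    have h5 : 2 * ∑ j ∈ range (n + 2), (j : ℝ) * gevCB j * gevCB (n + 1 - j)
        = ((n : ℝ) + 1) * ∑ i ∈ range (n + 2), gevCB i * gevCB (n + 1 - i) := by
      have h := gevCB_sym (n + 1)
      push_cast at h
      exact h
    have h6 : ((n : ℝ) + 1) * ∑ i ∈ range (n + 2), gevCB i * gevCB (n + 1 - i)
        = ((n : ℝ) + 1) * 4 ^ (n + 1) := by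
      rw [← h5, key, pow_succ]
      nlinarith [hsym2]
    have h7 := mul_left_cancel₀ (ne_of_gt hpos) h6
    exact h7


lemma gevCB_nonneg (i : ℕ) : 0 ≤ gevCB i := Nat.cast_nonneg _

lemma gevCB_le (i : ℕ) : gevCB i ≤ 4 ^ i := by
  have h1 : Nat.centralBinom i ≤ (2 * i + 1).choose i :=
    Nat.choose_le_choose i (by omega)
  have h2 := Nat.choose_middle_le_pow i
  unfold gevCB
  exact_mod_cast le_trans h1 h2

lemma gevCB_summable {z : ℝ} (h0 : 0 ≤ z) (h4 : 4 * z < 1) :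
    Summable (fun j => gevCB j * z ^ j) := by
  refine Summable.of_nonneg_of_le (f := fun j => (4 * z) ^ j)
    (fun j => mul_nonneg (gevCB_nonneg j) (pow_nonneg h0 j)) (fun j => ?_) ?_
  · show gevCB j * z ^ j ≤ (4 * z) ^ j
    rw [mul_pow]
    exact mul_le_mul_of_nonneg_right (gevCB_le j) (by positivity)
  · exact summable_geometric_of_lt_one (by positivity) h4

lemma gevCB_hasSum {z : ℝ} (h0 : 0 ≤ z) (h4 : 4 * z < 1) :
    HasSum (fun j => gevCB j * z ^ j) (1 / Real.sqrt (1 - 4 * z)) := by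
  have hs := gevCB_summable h0 h4
  set f : ℝ := ∑' j, gevCB j * z ^ j with hf
  have hnorm : Summable (fun j => ‖gevCB j * z ^ j‖) := by
    apply hs.congr
    intro j
    rw [Real.norm_eq_abs, abs_of_nonneg (mul_nonneg (gevCB_nonneg j) (pow_nonneg h0 j))]
  have hcauchy : f * f = ∑' m, ∑ i ∈ range (m + 1), (gevCB i * z ^ i) * (gevCB (m - i) * z ^ (m - i)) :=
    tsum_mul_tsum_eq_tsum_sum_range_of_summable_norm hnorm hnorm
  have hterm : ∀ m : ℕ, ∑ i ∈ range (m + 1), (gevCB i * z ^ i) * (gevCB (m - i) * z ^ (m - i))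
      = (4 * z) ^ m := by
    intro m
    have : ∀ i ∈ range (m + 1), (gevCB i * z ^ i) * (gevCB (m - i) * z ^ (m - i))
        = (gevCB i * gevCB (m - i)) * z ^ m := by
      intro i hi
      simp only [mem_range] at hi
      have : z ^ i * z ^ (m - i) = z ^ m := by
        rw [← pow_add]; congr 1; omega
      rw [show (gevCB i * z ^ i) * (gevCB (m - i) * z ^ (m - i))
          = (gevCB i * gevCB (m - i)) * (z ^ i * z ^ (m - i)) by ring, this]
    rw [Finset.sum_congr rfl this, ← Finset.sum_mul, gevCB_conv m, mul_pow]
  have hgeom : f * f = (1 - 4 * z)⁻¹ := by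
    rw [hcauchy, tsum_congr hterm, tsum_geometric_of_lt_one (by positivity) h4]
  have h1z : 0 < 1 - 4 * z := by linarith
  have hfpos : 0 < f := by
    have h0le : (1:ℝ) ≤ f := by
      have := hs.le_tsum 0 (fun j _ => mul_nonneg (gevCB_nonneg j) (pow_nonneg h0 j))
      rw [← hf] at this
      simpa [gevCB, Nat.centralBinom] using this
    linarith
  have hfeq : f = 1 / Real.sqrt (1 - 4 * z) := by
    have : Real.sqrt (f * f) = Real.sqrt ((1 - 4 * z)⁻¹) := by rw [hgeom]
    rw [Real.sqrt_mul_self hfpos.le, Real.sqrt_inv] at this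
    rw [this, one_div]
  rw [← hfeq]
  exact hs.hasSum

lemma gevCB_factorial (j : ℕ) : ((2 * j).factorial : ℝ) = gevCB j * (j.factorial : ℝ) ^ 2 := by
  unfold gevCB
  have h := Nat.choose_mul_factorial_mul_factorial (show j ≤ 2 * j by omega)
  rw [show 2 * j - j = j by omega] at h
  rw [Nat.centralBinom]
  push_cast [← h]
  ring

theorem gevKey (r : ℝ) (hr : 0 < r) :
    HasSum (fun k : ℕ => ((1 + r ^ 2) ^ (2 * k))⁻¹ * (Nat.factorial k : ℝ) *
        ∑ j ∈ Finset.range (k / 2 + 1),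
          r ^ (4 * j) / (2 ^ (2 * j) * (Nat.factorial (k - 2 * j) : ℝ) * (Nat.factorial j : ℝ) ^ 2))
      ((1 + r ^ 2) ^ 2 / (r ^ 2 * Real.sqrt ((2 + r ^ 2) ^ 2 - 1))) := by
  have hr2 : 0 < r ^ 2 := by positivity
  set p : ℝ := 1 + r ^ 2 with hp
  have hp1 : 1 < p := by simp [hp]; positivity
  have hp0 : 0 < p := by linarith
  set t : ℝ := (p ^ 2)⁻¹ with htdef
  have ht0 : 0 < t := by positivity
  have ht1 : t < 1 := by
    rw [htdef, inv_lt_one_iff₀]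
    right; nlinarith
  have htlt : ‖t‖ < 1 := by rw [Real.norm_eq_abs, abs_of_pos ht0]; exact ht1
  set u : ℝ := 1 - t with hudef
  have hu0 : 0 < u := by simp [hudef]; linarith
  have huval : u = r ^ 2 * (2 + r ^ 2) / p ^ 2 := by
    rw [hudef, htdef, hp]
    have : (1 + r ^ 2) ^ 2 ≠ 0 := by positivity
    field_simp
    ring
  set z : ℝ := r ^ 4 * t ^ 2 / (4 * u ^ 2) with hzdef
  have hz0 : 0 ≤ z := by positivity
  have hzval : z = (4 * (2 + r ^ 2) ^ 2)⁻¹ := by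
    rw [hzdef, huval, htdef]
    have h1 : p ^ 2 ≠ 0 := by positivity
    have h2 : (2 + r ^ 2) ≠ 0 := by positivity
    have h3 : r ^ 2 ≠ 0 := ne_of_gt hr2
    field_simp
  have h4z : 4 * z < 1 := by
    rw [hzval, ← div_eq_mul_inv, div_lt_one (by positivity)]
    nlinarith
  clear_value p t u z
  -- step A : fiberwise sums in m
  set g : ℕ → ℕ → ℝ := fun j m =>
    (r ^ 4 * t ^ 2 / 4) ^ j / ((j.factorial : ℝ) ^ 2) *
      (((m + 2 * j).factorial : ℝ) / (m.factorial : ℝ)) * t ^ m with hgdef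
  have hgnn : ∀ j m, 0 ≤ g j m := by
    intro j m
    rw [hgdef]
    refine mul_nonneg (mul_nonneg (div_nonneg (pow_nonneg (by positivity) j) (by positivity))
      (div_nonneg (by positivity) (by positivity))) (pow_nonneg ht0.le m)
  have hA : ∀ j : ℕ, HasSum (fun m => g j m) (u⁻¹ * (gevCB j * z ^ j)) := by
    intro j
    have h := (hasSum_choose_mul_geometric_of_norm_lt_one (2 * j) htlt).mul_left
      ((r ^ 4 * t ^ 2 / 4) ^ j * ((2 * j).factorial : ℝ) / ((j.factorial : ℝ) ^ 2))
    convert h using 1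
    · rfl
    · -- term equality
      funext m
      rw [hgdef]
      have hm : (m.factorial : ℝ) ≠ 0 := by positivity
      have hj : ((j.factorial : ℝ) ^ 2) ≠ 0 := by positivity
      have hc : ((m + 2 * j).choose (2 * j) : ℝ) * ((2 * j).factorial : ℝ) * (m.factorial : ℝ)
          = ((m + 2 * j).factorial : ℝ) := by
        have := Nat.choose_mul_factorial_mul_factorial (show 2 * j ≤ m + 2 * j by omega)
        rw [show m + 2 * j - 2 * j = m by omega] at this
        exact_mod_cast this
      field_simp
      rw [← hc]
      ring
    · -- sum equality
      have hu' : u ≠ 0 := ne_of_gt hu0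
      have hj : ((j.factorial : ℝ) ^ 2) ≠ 0 := by positivity
      have hz2 : z = (r ^ 4 * t ^ 2 / 4) * (u ^ 2)⁻¹ := by
        rw [hzdef]; ring
      have hzz : z ^ j = (r ^ 4 * t ^ 2 / 4) ^ j * ((u ^ 2) ^ j)⁻¹ := by
        rw [hz2, mul_pow, inv_pow]
      rw [gevCB_factorial j, hzz, ← hudef]
      field_simp
      ring
  -- step B : sum over j
  have hB : HasSum (fun j => u⁻¹ * (gevCB j * z ^ j)) (u⁻¹ * (1 / Real.sqrt (1 - 4 * z))) :=
    (gevCB_hasSum hz0 h4z).mul_left u⁻¹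
  -- product summability
  have hprod : Summable (fun q : ℕ × ℕ => g q.1 q.2) := by
    rw [summable_prod_of_nonneg (fun q => hgnn q.1 q.2)]
    refine ⟨fun j => (hA j).summable, ?_⟩
    apply hB.summable.congr
    intro j
    exact ((hA j).tsum_eq).symm
  have hprodsum : HasSum (fun q : ℕ × ℕ => g q.1 q.2)
      (u⁻¹ * (1 / Real.sqrt (1 - 4 * z))) := by
    have := hprod.hasSum
    rwa [hprod.tsum_prod' (fun j => (hA j).summable),
      tsum_congr (fun j => (hA j).tsum_eq), hB.tsum_eq] at this
  -- step D : reindex to (k, j)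
  set F : ℕ × ℕ → ℝ := fun q =>
    if 2 * q.2 ≤ q.1 then
      t ^ q.1 * r ^ (4 * q.2) * (q.1.factorial : ℝ) /
        (4 ^ q.2 * ((q.1 - 2 * q.2).factorial : ℝ) * (q.2.factorial : ℝ) ^ 2)
    else 0 with hFdef
  have hinj : Function.Injective (fun q : ℕ × ℕ => (2 * q.1 + q.2, q.1)) := by
    intro a b hab
    simp only [Prod.mk.injEq] at hab
    obtain ⟨h1, h2⟩ := hab
    exact Prod.ext h2 (by omega)
  have hF0 : ∀ q : ℕ × ℕ, q ∉ Set.range (fun q : ℕ × ℕ => (2 * q.1 + q.2, q.1)) → F q = 0 := by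
    intro q hq
    rw [hFdef]
    by_cases h : 2 * q.2 ≤ q.1
    · exfalso
      have he : 2 * q.2 + (q.1 - 2 * q.2) = q.1 := by omega
      exact hq ⟨(q.2, q.1 - 2 * q.2), by simp only [he]⟩
    · simp [h]
  have hFe : ∀ q : ℕ × ℕ, F (2 * q.1 + q.2, q.1) = g q.1 q.2 := by
    intro ⟨j, m⟩
    rw [hFdef, hgdef]
    simp only
    rw [if_pos (by omega)]
    rw [show 2 * j + m - 2 * j = m by omega]
    have hm : (m.factorial : ℝ) ≠ 0 := by positivity
    have hj : ((j.factorial : ℝ) ^ 2) ≠ 0 := by positivity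
    have e1 : (r ^ 4 * t ^ 2 / 4) ^ j = r ^ (4 * j) * t ^ (2 * j) / 4 ^ j := by
      rw [div_pow, mul_pow, pow_mul, pow_mul]
    rw [e1, show (2 * j + m).factorial = (m + 2 * j).factorial by rw [add_comm]]
    have h4 : (4 : ℝ) ^ j ≠ 0 := by positivity
    field_simp
    rw [pow_add]
  have hFsum : HasSum F (u⁻¹ * (1 / Real.sqrt (1 - 4 * z))) := by
    have hcomp : (F ∘ fun q : ℕ × ℕ => (2 * q.1 + q.2, q.1)) = fun q : ℕ × ℕ => g q.1 q.2 :=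
      funext fun q => hFe q
    rw [← Function.Injective.hasSum_iff hinj hF0, hcomp]
    exact hprodsum
  -- step E : fiberwise in k
  have hfiber : ∀ k : ℕ, HasSum (fun j => F (k, j))
      (((1 + r ^ 2) ^ (2 * k))⁻¹ * (Nat.factorial k : ℝ) *
        ∑ j ∈ Finset.range (k / 2 + 1),
          r ^ (4 * j) / (2 ^ (2 * j) * (Nat.factorial (k - 2 * j) : ℝ) *
            (Nat.factorial j : ℝ) ^ 2)) := by
    intro k
    have hvanish : ∀ j ∉ Finset.range (k / 2 + 1), F (k, j) = 0 := by
      intro j hj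
      simp only [Finset.mem_range] at hj
      rw [hFdef]
      have : ¬ (2 * j ≤ k) := by omega
      simp [this]
    have h := hasSum_sum_of_ne_finset_zero (L := SummationFilter.unconditional ℕ) hvanish
    convert h using 1
    rw [Finset.mul_sum]
    apply Finset.sum_congr rfl
    intro j hj
    simp only [Finset.mem_range] at hj
    have h2j : 2 * j ≤ k := by omega
    rw [hFdef]
    simp only
    rw [if_pos h2j]
    have e1 : ((1 + r ^ 2) ^ (2 * k))⁻¹ = t ^ k := by
      rw [htdef, hp, inv_pow, ← pow_mul]
    have e2 : (2 : ℝ) ^ (2 * j) = 4 ^ j := by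
      rw [pow_mul]; norm_num
    rw [e1, e2]
    have hkf : ((k - 2 * j).factorial : ℝ) ≠ 0 := by positivity
    have hjf : ((j.factorial : ℝ) ^ 2) ≠ 0 := by positivity
    have h4 : (4 : ℝ) ^ j ≠ 0 := by positivity
    field_simp
  have hmain : HasSum (fun k : ℕ => ((1 + r ^ 2) ^ (2 * k))⁻¹ * (Nat.factorial k : ℝ) *
      ∑ j ∈ Finset.range (k / 2 + 1),
        r ^ (4 * j) / (2 ^ (2 * j) * (Nat.factorial (k - 2 * j) : ℝ) *
          (Nat.factorial j : ℝ) ^ 2)) (u⁻¹ * (1 / Real.sqrt (1 - 4 * z))) :=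
    hFsum.prod_fiberwise hfiber
  -- final : identify the closed form
  have hfinal : u⁻¹ * (1 / Real.sqrt (1 - 4 * z))
      = (1 + r ^ 2) ^ 2 / (r ^ 2 * Real.sqrt ((2 + r ^ 2) ^ 2 - 1)) := by
    have hq : (0:ℝ) < 2 + r ^ 2 := by positivity
    have hA : (0:ℝ) < (2 + r ^ 2) ^ 2 - 1 := by nlinarith
    have h1 : 1 - 4 * z = ((2 + r ^ 2) ^ 2 - 1) / (2 + r ^ 2) ^ 2 := by
      rw [hzval]
      field_simp
    have h2 : Real.sqrt (1 - 4 * z) = Real.sqrt ((2 + r ^ 2) ^ 2 - 1) / (2 + r ^ 2) := by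
      rw [h1, Real.sqrt_div hA.le, Real.sqrt_sq hq.le]
    rw [h2, huval, hp]
    have hs : (0:ℝ) < Real.sqrt ((2 + r ^ 2) ^ 2 - 1) := Real.sqrt_pos.mpr hA
    have hne1 : (1 + r ^ 2 : ℝ) ≠ 0 := by positivity
    field_simp
  rw [hp, ← hfinal]
  exact hmain

theorem gaussian_extended_asymptotic_variance (r : ℝ) (hr : 0 < r) (n : ℕ) (hn : 0 < n) :
    (1 / (2 * (n : ℝ))) * ∑' k : ℕ,
        ((1 + r ^ 2) ^ (2 * (k + 1)))⁻¹ * (Nat.factorial (k + 1) : ℝ) *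
          ∑ j ∈ Finset.range ((k + 1) / 2 + 1),
            r ^ (4 * j) /
              (2 ^ (2 * j) * (Nat.factorial (k + 1 - 2 * j) : ℝ) * (Nat.factorial j : ℝ) ^ 2)
      = (1 / (2 * (n : ℝ))) *
          ((1 + r ^ 2) ^ 2 / (r ^ 2 * Real.sqrt ((2 + r ^ 2) ^ 2 - 1)) - 1) := by
  set f : ℕ → ℝ := fun k => ((1 + r ^ 2) ^ (2 * k))⁻¹ * (Nat.factorial k : ℝ) *
      ∑ j ∈ Finset.range (k / 2 + 1),
        r ^ (4 * j) / (2 ^ (2 * j) * (Nat.factorial (k - 2 * j) : ℝ) *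
          (Nat.factorial j : ℝ) ^ 2) with hf
  have hkey := gevKey r hr
  have hf0 : f 0 = 1 := by
    rw [hf]
    simp [Nat.factorial]
  have hshift : HasSum (fun k => f (k + 1))
      ((1 + r ^ 2) ^ 2 / (r ^ 2 * Real.sqrt ((2 + r ^ 2) ^ 2 - 1)) - 1) := by
    rw [hasSum_nat_add_iff 1]
    simpa [hf0] using hkey
  congr 1
  exact hshift.tsum_eq
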